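/- Let A_n and B_n satisfy (2n+1)X_n - 4n X_{n-1} + (2n-1)X_{n-2} = 0 with A_{-1}=0, A_0=1, B_{-1}=-1, B_0=0 (the case z=1). Then A_n = G_n and B_n = G_n - 1, where G_n = Σ_{s=0}^n 1/(2s+1). -/
import Mathlib


/-- G_n = Σ_{s=0}^n 1/(2s+1). -/
noncomputable def Gsum (n : ℕ) : ℝ :=
  ∑ s ∈ Finset.range (n + 1), (1 : ℝ) / (2 * s + 1)

lemma Gsum_succ (n : ℕ) : Gsum (n + 1) = Gsum n + 1 / (2 * (n + 1) + 1) := by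
  simp [Gsum, Finset.sum_range_succ]

theorem AB_at_one (A B : ℤ → ℝ)
    (hA0 : A (-1) = 0) (hA1 : A 0 = 1) (hB0 : B (-1) = -1) (hB1 : B 0 = 0)
    (hArec : ∀ n : ℤ, 1 ≤ n →
      (2 * (n : ℝ) + 1) * A n - 4 * n * A (n - 1) + (2 * n - 1) * A (n - 2) = 0)
    (hBrec : ∀ n : ℤ, 1 ≤ n →
      (2 * (n : ℝ) + 1) * B n - 4 * n * B (n - 1) + (2 * n - 1) * B (n - 2) = 0) :
    ∀ n : ℕ, A n = Gsum n ∧ B n = Gsum n - 1 := by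
  intro n
  induction n using Nat.twoStepInduction with
  | zero =>
    simp [Gsum, hA1, hB1]
  | one =>
    have hA := hArec 1 le_rfl
    have hB := hBrec 1 le_rfl
    norm_num [hA0, hA1, hB0, hB1] at hA hB
    have hG : Gsum 1 = 4 / 3 := by norm_num [Gsum, Finset.sum_range_succ]
    push_cast
    constructor
    · rw [hG]; linarith
    · rw [hG]; linarith
  | more n ih ih1 =>
    have hn : (1 : ℤ) ≤ (n : ℤ) + 2 := by omega
    have hA := hArec ((n : ℤ) + 2) hn
    have hB := hBrec ((n : ℤ) + 2) hn
    have e1 : ((n : ℤ) + 2 - 1) = ((n + 1 : ℕ) : ℤ) := by push_cast; ring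
    have e2 : ((n : ℤ) + 2 - 2) = ((n : ℕ) : ℤ) := by omega
    rw [e1, e2] at hA hB
    have hG2 : Gsum (n + 2) = Gsum (n + 1) + 1 / (2 * (n + 2) + 1) := by
      have h := Gsum_succ (n + 1)
      have e : n + 1 + 1 = n + 2 := rfl
      rw [e] at h
      push_cast at h ⊢
      rw [h]; ring_nf
    have hG1 : Gsum (n + 1) = Gsum n + 1 / (2 * (n + 1) + 1) := Gsum_succ n
    have h3 : (2 * ((n : ℝ) + 2) + 1) ≠ 0 := by positivity
    have h4 : (2 * ((n : ℝ) + 1) + 1) ≠ 0 := by positivity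
    have hcast : ((((n : ℤ) + 2) : ℤ) : ℝ) = (n : ℝ) + 2 := by push_cast; ring
    rw [hcast] at hA hB
    have eq2 : (((n : ℕ) + 2 : ℕ) : ℤ) = (n : ℤ) + 2 := by push_cast; ring
    rw [eq2]
    obtain ⟨iA, iB⟩ := ih
    obtain ⟨iA1, iB1⟩ := ih1
    rw [iA1, iA] at hA
    rw [iB1, iB] at hB
    constructor
    · rw [hG2, hG1]
      rw [hG1] at hA
      field_simp at hA ⊢
      nlinarith [hA]
    · rw [hG2, hG1]
      rw [hG1] at hB
      field_simp at hB ⊢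
      nlinarith [hB]
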